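/- Let l ≥ 2 be even, let 𝔤 ≥ 1, n_s ≥ 0, n_v ≥ 0, and assume 3 ∣ l whenever n_v > 0. Let G be the group with presentation ⟨x₁, …, x_{n_s}, y₁, …, y_{n_v}, z, d₁, …, d_{𝔤} | x_i² = 1 (1 ≤ i ≤ n_s), y_j³ = 1 (1 ≤ j ≤ n_v), z^l = 1, x₁⋯x_{n_s}·y₁⋯y_{n_v}·z·d₁²⋯d_{𝔤}² = 1⟩. Then the number of surjective group homomorphisms φ from G to the cyclic group Z/lZ such that φ(x_i) has order exactly 2 for every i, φ(y_j) has order exactly 3 for every j, and φ(z) has order exactly l, equals 2 · l^{𝔤−1} · φ_E(l) · 2^{n_v} if (l/2)·n_s + (l/3)·n_v + 1 is even (where the term (l/3)·n_v is 0 when n_v = 0), and equals 0 otherwise; here φ_E is Euler's totient function. -/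
import Mathlib


/-- Generators of the fundamental group of a closed non-orientable orbifold of
genus `gg` with signature `(gg; [2,…,2 (ns times), 3,…,3 (nv times), l])`: the
index-2 branch-point generators `x₁, …, x_{ns}` (`Sum.inl`), the index-3
branch-point generators `y₁, …, y_{nv}` (`Sum.inr (Sum.inl _)`), the generator `z`
of the face branch point (`Sum.inr (Sum.inr (Sum.inl ()))`), and the crosscap
generators `d₁, …, d_{gg}` (`Sum.inr (Sum.inr (Sum.inr _))`). -/
abbrev OrbGen (ns nv gg : ℕ) := Sum (Fin ns) (Sum (Fin nv) (Sum Unit (Fin gg)))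

/-- The relations `x_i² = 1`, `y_j³ = 1`, `z^l = 1`,
`x₁ ⋯ x_{ns} · y₁ ⋯ y_{nv} · z · d₁² ⋯ d_{gg}² = 1`. -/
def orbRels (ns nv gg l : ℕ) : Set (FreeGroup (OrbGen ns nv gg)) :=
  (Set.range fun i : Fin ns => (FreeGroup.of (Sum.inl i : OrbGen ns nv gg)) ^ 2) ∪
  (Set.range fun j : Fin nv =>
    (FreeGroup.of (Sum.inr (Sum.inl j) : OrbGen ns nv gg)) ^ 3) ∪
  {(FreeGroup.of (Sum.inr (Sum.inr (Sum.inl ())) : OrbGen ns nv gg)) ^ l} ∪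
  {(List.ofFn fun i : Fin ns => FreeGroup.of (Sum.inl i : OrbGen ns nv gg)).prod *
    (List.ofFn fun j : Fin nv =>
      FreeGroup.of (Sum.inr (Sum.inl j) : OrbGen ns nv gg)).prod *
    FreeGroup.of (Sum.inr (Sum.inr (Sum.inl ())) : OrbGen ns nv gg) *
    (List.ofFn fun i : Fin gg =>
      (FreeGroup.of (Sum.inr (Sum.inr (Sum.inr i)) : OrbGen ns nv gg)) ^ 2).prod}

section ZModLemmas
variable {l : ℕ} (hl : 2 ≤ l) (hev : Even l)

lemma two_mul_eq_zero_iff (hl : 2 ≤ l) (hev : Even l) (x : ZMod l) :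
    2 * x = 0 ↔ x = 0 ∨ x = ((l / 2 : ℕ) : ZMod l) := by
  have : NeZero l := ⟨by omega⟩
  obtain ⟨m, hm⟩ := hev
  have hml : l = 2 * m := by omega
  constructor
  · intro h
    have hx : ((2 * x.val : ℕ) : ZMod l) = 0 := by
      push_cast [ZMod.natCast_val, ZMod.cast_id]
      rw [h]
    rw [ZMod.natCast_eq_zero_iff] at hx
    obtain ⟨c, hc⟩ := hx
    have hc2 : 2 * x.val = 2 * (m * c) := by rw [hc, hml]; ring
    have hk : x.val = m * c := by omega
    have hlt : x.val < l := ZMod.val_lt x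
    have hm0 : 0 < m := by omega
    have hclt : c < 2 := by nlinarith
    interval_cases c
    · left
      have : x.val = 0 := by omega
      rw [← ZMod.natCast_zmod_val x, this]; simp
    · right
      have hxm : x.val = m := by omega
      have : l / 2 = m := by omega
      rw [← ZMod.natCast_zmod_val x, hxm, this]
  · rintro (rfl | rfl)
    · ring
    · have : (2 : ZMod l) * ((l / 2 : ℕ) : ZMod l) = ((2 * (l / 2) : ℕ) : ZMod l) := by push_cast; ring
      rw [this]
      have h2 : 2 * (l / 2) = l := by omega
      rw [h2, ZMod.natCast_self]
end ZModLemmas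

section Parity
variable {l : ℕ}

lemma parity_hom_eq_zero_iff (hl : 2 ≤ l) (hev : Even l) (b : ZMod l) :
    (ZMod.castHom (even_iff_two_dvd.mp hev) (ZMod 2)) b = 0 ↔ Even b.val := by
  have : NeZero l := ⟨by omega⟩
  rw [ZMod.castHom_apply, ← ZMod.natCast_val, ZMod.natCast_eq_zero_iff]
  exact ⟨fun h => even_iff_two_dvd.mpr h, fun h => even_iff_two_dvd.mp h⟩

lemma card_two_mul_fiber (hl : 2 ≤ l) (hev : Even l) (b : ZMod l) :
    Nat.card {a : ZMod l // 2 * a = b} = if Even b.val then 2 else 0 := by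
  have : NeZero l := ⟨by omega⟩
  by_cases hb : Even b.val
  · rw [if_pos hb]
    obtain ⟨k, hk⟩ := hb
    set t : ZMod l := ((l / 2 : ℕ) : ZMod l) with ht
    have h2t : 2 * t = 0 := (two_mul_eq_zero_iff hl hev _).mpr (Or.inr rfl)
    set c1 : ZMod l := (k : ZMod l) with hc1
    have h2c1 : 2 * c1 = b := by
      have h1 : 2 * c1 = ((k + k : ℕ) : ZMod l) := by push_cast; ring
      rw [h1, ← hk, ZMod.natCast_zmod_val]
    have key : ∀ a : ZMod l, 2 * a = b ↔ a = c1 ∨ a = c1 + t := by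
      intro a
      constructor
      · intro h
        have h0 : 2 * (a - c1) = 0 := by linear_combination h - h2c1
        rcases (two_mul_eq_zero_iff hl hev _).mp h0 with h1 | h1
        · left; linear_combination h1
        · right; linear_combination h1
      · rintro (rfl | rfl)
        · exact h2c1
        · linear_combination h2c1 + h2t
    have hne : c1 ≠ c1 + t := by
      intro h
      have h0 : t = 0 := by linear_combination -h
      rw [ht, ZMod.natCast_eq_zero_iff] at h0
      have := Nat.le_of_dvd (by omega) h0
      omega
    have e : {a : ZMod l // 2 * a = b} ≃ ({c1, c1 + t} : Set (ZMod l)) :=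
      Equiv.subtypeEquivRight (by intro a; rw [key a]; simp)
    rw [Nat.card_congr e, Nat.card_coe_set_eq, Set.ncard_pair hne]
  · rw [if_neg hb]
    have he : IsEmpty {a : ZMod l // 2 * a = b} := by
      refine ⟨fun ⟨a, ha⟩ => hb ?_⟩
      have hcast : b = ((2 * a.val : ℕ) : ZMod l) := by
        rw [← ha]; push_cast [ZMod.natCast_val, ZMod.cast_id]; ring
      have : b.val = (2 * a.val) % l := by rw [hcast, ZMod.val_natCast]
      rw [Nat.even_iff, this, Nat.mod_mod_of_dvd _ (even_iff_two_dvd.mp hev)]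
      omega
    exact Nat.card_of_isEmpty
end Parity

section Fiber
variable {l : ℕ}

lemma parity_sub_two_mul (hl : 2 ≤ l) (hev : Even l) (b s : ZMod l) :
    Even ((b - 2 * s).val) ↔ Even b.val := by
  rw [← parity_hom_eq_zero_iff hl hev, ← parity_hom_eq_zero_iff hl hev]
  have h2 : (ZMod.castHom (even_iff_two_dvd.mp hev) (ZMod 2)) (2 : ZMod l) = 0 := by
    rw [map_ofNat]; decide
  rw [map_sub, map_mul, h2, zero_mul, sub_zero]

lemma card_sigma_const {ι : Type*} [Fintype ι] {F : ι → Type*} [∀ i, Fintype (F i)] {K : ℕ}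
    (h : ∀ i, Nat.card (F i) = K) : Nat.card (Σ i, F i) = Nat.card ι * K := by
  simp only [Nat.card_eq_fintype_card]
  rw [Fintype.card_sigma, Finset.sum_congr rfl fun i _ => (Nat.card_eq_fintype_card (α := F i)).symm.trans (h i),
    Finset.sum_const, Finset.card_univ, smul_eq_mul]

lemma card_d_fiber (hl : 2 ≤ l) (hev : Even l) (k : ℕ) (b : ZMod l) :
    Nat.card {d : Fin (k+1) → ZMod l // 2 * (∑ i, d i) = b} =
      (if Even b.val then 2 else 0) * l ^ k := by
  classical
  have : NeZero l := ⟨by omega⟩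
  have e1 : {d : Fin (k+1) → ZMod l // 2 * (∑ i, d i) = b} ≃
      {p : (Fin k → ZMod l) × ZMod l // 2 * p.2 = b - 2 * ∑ i, p.1 i} :=
    { toFun := fun d => ⟨(Fin.tail d.1, d.1 0), by
        have hd := d.2
        rw [Fin.sum_univ_succ] at hd
        simp only [Fin.tail]
        linear_combination hd⟩
      invFun := fun p => ⟨Fin.cons p.1.2 p.1.1, by
        rw [Fin.sum_univ_succ]
        simp only [Fin.cons_zero, Fin.cons_succ]
        linear_combination p.2⟩
      left_inv := fun d => Subtype.ext (Fin.cons_self_tail d.1)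
      right_inv := fun p => Subtype.ext (by simp) }
  have e2 : {p : (Fin k → ZMod l) × ZMod l // 2 * p.2 = b - 2 * ∑ i, p.1 i} ≃
      Σ t : Fin k → ZMod l, {a : ZMod l // 2 * a = b - 2 * ∑ i, t i} :=
    Equiv.subtypeProdEquivSigmaSubtype (fun (t : Fin k → ZMod l) (a : ZMod l) => 2 * a = b - 2 * ∑ i, t i)
  rw [Nat.card_congr (e1.trans e2),
    card_sigma_const (K := if Even b.val then 2 else 0) (fun t => by
      rw [card_two_mul_fiber hl hev]; simp only [parity_sub_two_mul hl hev]),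
    Nat.card_fun, Nat.card_zmod, Nat.card_eq_fintype_card, Fintype.card_fin, mul_comm]
end Fiber

section Orders
variable {l : ℕ}

local notation "M" l => Multiplicative (ZMod l)

lemma order_two_elt (hl : 2 ≤ l) (hev : Even l) (x : Multiplicative (ZMod l))
    (hx : orderOf x = 2) : x.toAdd = ((l / 2 : ℕ) : ZMod l) := by
  have h1 : x ^ 2 = 1 := by rw [← hx]; exact pow_orderOf_eq_one x
  have h2 : 2 * x.toAdd = 0 := by
    have := congrArg Multiplicative.toAdd h1
    rw [toAdd_pow] at this
    simpa [two_nsmul, two_mul] using this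
  rcases (two_mul_eq_zero_iff hl hev _).mp h2 with h | h
  · exfalso
    have : x = 1 := by
      have : x.toAdd = (1 : Multiplicative (ZMod l)).toAdd := by simpa using h
      exact Multiplicative.toAdd.injective this
    rw [this, orderOf_one] at hx
    omega
  · exact h

lemma order_three_parity (hl : 2 ≤ l) (hev : Even l) (y : Multiplicative (ZMod l))
    (hy : orderOf y = 3) :
    (ZMod.castHom (even_iff_two_dvd.mp hev) (ZMod 2)) y.toAdd = 0 := by
  have h1 : y ^ 3 = 1 := by rw [← hy]; exact pow_orderOf_eq_one y
  have h2 : (3 : ZMod l) * y.toAdd = 0 := by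
    have := congrArg Multiplicative.toAdd h1
    rw [toAdd_pow] at this
    rw [show ((3 : ZMod l) * y.toAdd) = (3 : ℕ) • y.toAdd by
      simp [nsmul_eq_mul]]
    simpa using this
  have h3 := congrArg (ZMod.castHom (even_iff_two_dvd.mp hev) (ZMod 2)) h2
  rw [map_mul, map_zero] at h3
  have h4 : (ZMod.castHom (even_iff_two_dvd.mp hev) (ZMod 2)) (3 : ZMod l) = 1 := by
    rw [map_ofNat]; decide
  rw [h4, one_mul] at h3
  exact h3

lemma order_l_parity (hl : 2 ≤ l) (hev : Even l) (z : Multiplicative (ZMod l))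
    (hz : orderOf z = l) :
    (ZMod.castHom (even_iff_two_dvd.mp hev) (ZMod 2)) z.toAdd = 1 := by
  have : NeZero l := ⟨by omega⟩
  by_contra h
  have h0 : (ZMod.castHom (even_iff_two_dvd.mp hev) (ZMod 2)) z.toAdd = 0 := by
    have : ∀ w : ZMod 2, w ≠ 1 → w = 0 := by decide
    exact this _ h
  rw [parity_hom_eq_zero_iff hl hev] at h0
  obtain ⟨k, hk⟩ := h0
  have hzpow : z ^ (l / 2) = 1 := by
    have : (l / 2) • z.toAdd = 0 := by
      rw [show ((l / 2) • z.toAdd) = ((l / 2 : ℕ) : ZMod l) * z.toAdd by simp [nsmul_eq_mul],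
        ← ZMod.natCast_zmod_val z.toAdd, hk]
      have : ((l / 2 : ℕ) : ZMod l) * ((k + k : ℕ) : ZMod l) = ((l / 2 * (k + k) : ℕ) : ZMod l) := by
        push_cast; ring
      rw [this]
      have h2 : l / 2 * (k + k) = l * k := by
        obtain ⟨m, hm⟩ := hev
        subst hm
        rw [show (m + m) / 2 = m by omega]
        ring
      rw [h2]
      have : ((l * k : ℕ) : ZMod l) = ((l : ℕ) : ZMod l) * (k : ZMod l) := by push_cast; ring
      rw [this, ZMod.natCast_self, zero_mul]
    have := congrArg Multiplicative.ofAdd this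
    apply Multiplicative.toAdd.injective
    rw [toAdd_pow]
    simpa using ‹(l / 2) • z.toAdd = 0›
  have hdvd2 : orderOf z ∣ l / 2 := orderOf_dvd_of_pow_eq_one hzpow
  rw [hz] at hdvd2
  have := Nat.le_of_dvd (by omega) hdvd2
  omega

lemma card_order_eq (hl : 2 ≤ l) {d : ℕ} (hd : d ∣ l) :
    Nat.card {m : Multiplicative (ZMod l) // orderOf m = d} = Nat.totient d := by
  classical
  have : NeZero l := ⟨by omega⟩
  rw [Nat.card_eq_fintype_card, Fintype.card_subtype]
  have hcard : d ∣ Fintype.card (Multiplicative (ZMod l)) := by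
    rwa [Fintype.card_multiplicative, ZMod.card]
  exact IsCyclic.card_orderOf_eq_totient hcard

lemma surj_of_order_l (hl : 2 ≤ l) {G : Type*} [Group G] (φ : G →* Multiplicative (ZMod l))
    (g : G) (h : orderOf (φ g) = l) : Function.Surjective φ := by
  have : NeZero l := ⟨by omega⟩
  have htop : Subgroup.zpowers (φ g) = ⊤ := by
    apply Subgroup.eq_top_of_card_eq
    rw [Nat.card_zpowers, h]
    rw [Nat.card_congr Multiplicative.toAdd, Nat.card_zmod]
  intro m
  have hm : m ∈ Subgroup.zpowers (φ g) := htop ▸ Subgroup.mem_top m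
  obtain ⟨n, hn⟩ := hm
  exact ⟨g ^ n, by rw [map_zpow]; exact hn⟩
end Orders

section Hom
variable {l gg ns nv : ℕ}

/-- image of the long relator under any hom from the free group -/
lemma hom_relator (h : FreeGroup (OrbGen ns nv gg) →* Multiplicative (ZMod l)) :
    h ((List.ofFn fun i : Fin ns => FreeGroup.of (Sum.inl i : OrbGen ns nv gg)).prod *
       (List.ofFn fun j : Fin nv =>
         FreeGroup.of (Sum.inr (Sum.inl j) : OrbGen ns nv gg)).prod *
       FreeGroup.of (Sum.inr (Sum.inr (Sum.inl ())) : OrbGen ns nv gg) *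
       (List.ofFn fun i : Fin gg =>
         (FreeGroup.of (Sum.inr (Sum.inr (Sum.inr i)) : OrbGen ns nv gg)) ^ 2).prod) =
    (∏ i, h (FreeGroup.of (Sum.inl i))) * (∏ j, h (FreeGroup.of (Sum.inr (Sum.inl j)))) *
      h (FreeGroup.of (Sum.inr (Sum.inr (Sum.inl ())))) *
      (∏ i, (h (FreeGroup.of (Sum.inr (Sum.inr (Sum.inr i))))) ^ 2) := by
  simp [map_list_prod, List.map_ofFn, List.prod_ofFn, Function.comp_def]

def tupleFun (q : (Fin ns → Multiplicative (ZMod l)) × (Fin nv → Multiplicative (ZMod l)) ×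
    Multiplicative (ZMod l) × (Fin gg → Multiplicative (ZMod l))) :
    OrbGen ns nv gg → Multiplicative (ZMod l) :=
  Sum.elim q.1 (Sum.elim q.2.1 (Sum.elim (fun _ => q.2.2.1) q.2.2.2))

lemma card_hom_eq_card_tuple (hl : 2 ≤ l) :
    Nat.card {φ : PresentedGroup (orbRels ns nv gg l) →* Multiplicative (ZMod l) //
      Function.Surjective φ ∧
      (∀ i : Fin ns, orderOf (φ (PresentedGroup.of (Sum.inl i))) = 2) ∧
      (∀ j : Fin nv, orderOf (φ (PresentedGroup.of (Sum.inr (Sum.inl j)))) = 3) ∧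
      orderOf (φ (PresentedGroup.of (Sum.inr (Sum.inr (Sum.inl ()))))) = l} =
    Nat.card {q : (Fin ns → Multiplicative (ZMod l)) × (Fin nv → Multiplicative (ZMod l)) ×
      Multiplicative (ZMod l) × (Fin gg → Multiplicative (ZMod l)) //
      (∀ i, orderOf (q.1 i) = 2) ∧ (∀ j, orderOf (q.2.1 j) = 3) ∧ orderOf q.2.2.1 = l ∧
      (∏ i, q.1 i) * (∏ j, q.2.1 j) * q.2.2.1 * ∏ i, (q.2.2.2 i) ^ 2 = 1} := by
  have hfq : ∀ q : (Fin ns → Multiplicative (ZMod l)) × (Fin nv → Multiplicative (ZMod l)) ×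
      Multiplicative (ZMod l) × (Fin gg → Multiplicative (ZMod l)),
      ((∀ i, orderOf (q.1 i) = 2) ∧ (∀ j, orderOf (q.2.1 j) = 3) ∧
      orderOf q.2.2.1 = l ∧
      (∏ i, q.1 i) * (∏ j, q.2.1 j) * q.2.2.1 * ∏ i, (q.2.2.2 i) ^ 2 = 1) →
      ∀ r ∈ orbRels ns nv gg l, FreeGroup.lift (tupleFun q) r = 1 := by
    rintro q ⟨hx, hy, hz, hprod⟩ r hr
    simp only [orbRels, Set.mem_union, Set.mem_range, Set.mem_singleton_iff] at hr
    rcases hr with ((⟨i, rfl⟩ | ⟨j, rfl⟩) | rfl) | rfl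
    · rw [map_pow, FreeGroup.lift_apply_of]
      have h := pow_orderOf_eq_one (q.1 i)
      rw [hx i] at h
      exact h
    · rw [map_pow, FreeGroup.lift_apply_of]
      have h := pow_orderOf_eq_one (q.2.1 j)
      rw [hy j] at h
      exact h
    · rw [map_pow, FreeGroup.lift_apply_of]
      have h := pow_orderOf_eq_one q.2.2.1
      rw [hz] at h
      exact h
    · rw [hom_relator]
      simp only [FreeGroup.lift_apply_of]
      exact hprod
  refine Nat.card_congr ⟨fun φ => ⟨(fun i => φ.1 (PresentedGroup.of (Sum.inl i)),
      fun j => φ.1 (PresentedGroup.of (Sum.inr (Sum.inl j))),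
      φ.1 (PresentedGroup.of (Sum.inr (Sum.inr (Sum.inl ())))),
      fun i => φ.1 (PresentedGroup.of (Sum.inr (Sum.inr (Sum.inr i))))), ?_⟩,
    fun q => ⟨PresentedGroup.toGroup (hfq q.1 q.2), ?_⟩, ?_, ?_⟩
  · obtain ⟨φ, hsurj, hx, hy, hz⟩ := φ
    refine ⟨hx, hy, hz, ?_⟩
    have hmem : ((List.ofFn fun i : Fin ns =>
        FreeGroup.of (Sum.inl i : OrbGen ns nv gg)).prod *
        (List.ofFn fun j : Fin nv =>
          FreeGroup.of (Sum.inr (Sum.inl j) : OrbGen ns nv gg)).prod *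
        FreeGroup.of (Sum.inr (Sum.inr (Sum.inl ())) : OrbGen ns nv gg) *
        (List.ofFn fun i : Fin gg =>
          (FreeGroup.of (Sum.inr (Sum.inr (Sum.inr i)) : OrbGen ns nv gg)) ^ 2).prod) ∈
        orbRels ns nv gg l := Or.inr rfl
    have hone : (PresentedGroup.mk (orbRels ns nv gg l)) _ = 1 :=
      (QuotientGroup.eq_one_iff _).mpr (Subgroup.subset_normalClosure hmem)
    exact (hom_relator (φ.comp (PresentedGroup.mk (orbRels ns nv gg l)))).symm.trans
      (by rw [MonoidHom.comp_apply, hone, map_one])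
  · obtain ⟨q, hx, hy, hz, hprod⟩ := q
    refine ⟨?_, fun i => by simp [PresentedGroup.toGroup.of]; exact hx i,
      fun j => by simp [PresentedGroup.toGroup.of]; exact hy j,
      by simp [PresentedGroup.toGroup.of]; exact hz⟩
    exact surj_of_order_l hl _ (PresentedGroup.of (Sum.inr (Sum.inr (Sum.inl ()))))
      (by simp [PresentedGroup.toGroup.of]; exact hz)
  · rintro ⟨φ, hφ⟩
    refine Subtype.ext ?_
    refine PresentedGroup.ext fun a => ?_
    rw [PresentedGroup.toGroup.of]
    rcases a with i | j | u | i
    · rfl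
    · rfl
    · rfl
    · rfl
  · rintro q
    refine Subtype.ext (Prod.ext ?_ (Prod.ext ?_ (Prod.ext ?_ ?_)))
    · funext i; exact PresentedGroup.toGroup.of (hfq q.1 q.2)
    · funext j; exact PresentedGroup.toGroup.of (hfq q.1 q.2)
    · exact PresentedGroup.toGroup.of (hfq q.1 q.2)
    · funext i; exact PresentedGroup.toGroup.of (hfq q.1 q.2)
end Hom


set_option maxHeartbeats 1000000 in
/-- for even `l ≥ 2`, `gg ≥ 1`, `ns, nv ≥ 0` with `3 ∣ l` whenever
`nv > 0`, the number of order-preserving epimorphisms from the fundamental group of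
the non-orientable orbifold with signature `(gg; [2,…,2 (ns times), 3,…,3 (nv times), l])`
onto `Z/lZ` equals `2 · l^(gg-1) · φ(l) · 2^nv` if `(l/2)·ns + (l/3)·nv + 1` is even,
and `0` otherwise. -/
theorem count_order_preserving_epi_even_period
    (l gg ns nv : ℕ) (hl : 2 ≤ l) (heven : Even l) (hgg : 1 ≤ gg)
    (hdvd : 0 < nv → 3 ∣ l) :
    Nat.card {φ : PresentedGroup (orbRels ns nv gg l) →* Multiplicative (ZMod l) //
      Function.Surjective φ ∧
      (∀ i : Fin ns, orderOf (φ (PresentedGroup.of (Sum.inl i))) = 2) ∧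
      (∀ j : Fin nv, orderOf (φ (PresentedGroup.of (Sum.inr (Sum.inl j)))) = 3) ∧
      orderOf (φ (PresentedGroup.of (Sum.inr (Sum.inr (Sum.inl ()))))) = l} =
    if Even (l / 2 * ns + l / 3 * nv + 1) then
      2 * l ^ (gg - 1) * Nat.totient l * 2 ^ nv
    else 0 := by
  classical
  have hNZ : NeZero l := ⟨by omega⟩
  rw [card_hom_eq_card_tuple hl]
  obtain ⟨k, rfl⟩ : ∃ k, gg = k + 1 := ⟨gg - 1, by omega⟩
  have hD : ∀ t : (Fin ns → {m : Multiplicative (ZMod l) // orderOf m = 2}) ×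
      (Fin nv → {m : Multiplicative (ZMod l) // orderOf m = 3}) ×
      {m : Multiplicative (ZMod l) // orderOf m = l},
      Nat.card {d : Fin (k + 1) → Multiplicative (ZMod l) //
        (∏ i, (t.1 i : Multiplicative (ZMod l))) * (∏ j, (t.2.1 j : Multiplicative (ZMod l))) *
          (t.2.2 : Multiplicative (ZMod l)) * ∏ i, (d i) ^ 2 = 1} =
      (if Even (l / 2 * ns + l / 3 * nv + 1) then 2 else 0) * l ^ k := by
    intro t
    set A := (∏ i, (t.1 i : Multiplicative (ZMod l))) *
      (∏ j, (t.2.1 j : Multiplicative (ZMod l))) * (t.2.2 : Multiplicative (ZMod l)) with hA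
    have e3 : {d : Fin (k + 1) → Multiplicative (ZMod l) // A * ∏ i, (d i) ^ 2 = 1} ≃
        {d' : Fin (k + 1) → ZMod l // 2 * ∑ i, d' i = -A.toAdd} := by
      refine (Equiv.piCongrRight fun _ => Multiplicative.toAdd).subtypeEquiv fun d => ?_
      show A * ∏ i, (d i) ^ 2 = 1 ↔ 2 * ∑ i, (d i).toAdd = -A.toAdd
      constructor
      · intro h
        have h2 := congrArg Multiplicative.toAdd h
        simp only [toAdd_mul, toAdd_prod, toAdd_pow, toAdd_one, nsmul_eq_mul,
          Nat.cast_ofNat] at h2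
        rw [← Finset.mul_sum] at h2
        linear_combination h2
      · intro h
        apply Multiplicative.toAdd.injective
        simp only [toAdd_mul, toAdd_prod, toAdd_pow, toAdd_one, nsmul_eq_mul, Nat.cast_ofNat]
        rw [← Finset.mul_sum]
        linear_combination h
    rw [Nat.card_congr e3, card_d_fiber hl heven k]
    have hiff : Even ((-A.toAdd).val) ↔ Even (l / 2 * ns + l / 3 * nv + 1) := by
      rw [← parity_hom_eq_zero_iff hl heven]
      have hx' : ∀ i, (ZMod.castHom (even_iff_two_dvd.mp heven) (ZMod 2))
          ((t.1 i : Multiplicative (ZMod l)).toAdd) = ((l / 2 : ℕ) : ZMod 2) := fun i => by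
        rw [order_two_elt hl heven _ (t.1 i).2, map_natCast]
      have hy' : ∀ j, (ZMod.castHom (even_iff_two_dvd.mp heven) (ZMod 2))
          ((t.2.1 j : Multiplicative (ZMod l)).toAdd) = 0 := fun j =>
        order_three_parity hl heven _ (t.2.1 j).2
      have hz' : (ZMod.castHom (even_iff_two_dvd.mp heven) (ZMod 2))
          ((t.2.2 : Multiplicative (ZMod l)).toAdd) = 1 :=
        order_l_parity hl heven _ t.2.2.2
      have hAt : A.toAdd = (∑ i, (t.1 i : Multiplicative (ZMod l)).toAdd) +
          (∑ j, (t.2.1 j : Multiplicative (ZMod l)).toAdd) +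
          (t.2.2 : Multiplicative (ZMod l)).toAdd := by
        rw [hA]; simp [toAdd_mul, toAdd_prod]
      have hAp : (ZMod.castHom (even_iff_two_dvd.mp heven) (ZMod 2)) A.toAdd =
          (ns : ZMod 2) * ((l / 2 : ℕ) : ZMod 2) + 1 := by
        rw [hAt, map_add, map_add, map_sum, map_sum]
        simp only [hx', hy', hz', Finset.sum_const, Finset.card_univ, Fintype.card_fin,
          nsmul_eq_mul, Finset.sum_const_zero, add_zero]
        ring
      have hw : ((l / 2 * ns + l / 3 * nv + 1 : ℕ) : ZMod 2) =
          (ns : ZMod 2) * ((l / 2 : ℕ) : ZMod 2) + 1 := by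
        have h3 : ((l / 3 : ℕ) : ZMod 2) * (nv : ZMod 2) = 0 := by
          rcases Nat.eq_zero_or_pos nv with h | h
          · simp [h]
          · have h6 : 6 ∣ l := Nat.Coprime.mul_dvd_of_dvd_of_dvd (by norm_num)
              (even_iff_two_dvd.mp heven) (hdvd h)
            have : ((l / 3 : ℕ) : ZMod 2) = 0 := by
              rw [ZMod.natCast_eq_zero_iff]; omega
            rw [this, zero_mul]
        push_cast
        rw [h3]
        ring
      rw [map_neg, hAp, neg_eq_zero, ← hw, ZMod.natCast_eq_zero_iff]
      exact Iff.symm even_iff_two_dvd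
    rw [if_congr hiff rfl rfl]
  have e2 : {q : (Fin ns → Multiplicative (ZMod l)) × (Fin nv → Multiplicative (ZMod l)) ×
      Multiplicative (ZMod l) × (Fin (k + 1) → Multiplicative (ZMod l)) //
      (∀ i, orderOf (q.1 i) = 2) ∧ (∀ j, orderOf (q.2.1 j) = 3) ∧ orderOf q.2.2.1 = l ∧
      (∏ i, q.1 i) * (∏ j, q.2.1 j) * q.2.2.1 * ∏ i, (q.2.2.2 i) ^ 2 = 1} ≃
      Σ t : (Fin ns → {m : Multiplicative (ZMod l) // orderOf m = 2}) ×
        (Fin nv → {m : Multiplicative (ZMod l) // orderOf m = 3}) ×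
        {m : Multiplicative (ZMod l) // orderOf m = l},
        {d : Fin (k + 1) → Multiplicative (ZMod l) //
          (∏ i, (t.1 i : Multiplicative (ZMod l))) *
            (∏ j, (t.2.1 j : Multiplicative (ZMod l))) *
            (t.2.2 : Multiplicative (ZMod l)) * ∏ i, (d i) ^ 2 = 1} :=
    { toFun := fun q => ⟨(fun i => ⟨q.1.1 i, q.2.1 i⟩, fun j => ⟨q.1.2.1 j, q.2.2.1 j⟩,
        ⟨q.1.2.2.1, q.2.2.2.1⟩), ⟨q.1.2.2.2, q.2.2.2.2⟩⟩
      invFun := fun s => ⟨(fun i => (s.1.1 i : Multiplicative (ZMod l)),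
        fun j => (s.1.2.1 j : Multiplicative (ZMod l)),
        (s.1.2.2 : Multiplicative (ZMod l)), fun i => s.2.1 i),
        fun i => (s.1.1 i).2, fun j => (s.1.2.1 j).2, (s.1.2.2).2, s.2.2⟩
      left_inv := fun q => rfl
      right_inv := fun s => rfl }
  rw [Nat.card_congr e2, card_sigma_const hD, Nat.card_prod, Nat.card_prod,
    Nat.card_fun, Nat.card_fun, card_order_eq hl (even_iff_two_dvd.mp heven),
    card_order_eq hl (dvd_refl l)]
  have h2nv : Nat.card {m : Multiplicative (ZMod l) // orderOf m = 3} ^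
      Nat.card (Fin nv) = 2 ^ nv := by
    rcases Nat.eq_zero_or_pos nv with h | h
    · subst h; simp
    · rw [card_order_eq hl (hdvd h)]
      simp [Nat.totient_prime (by norm_num : Nat.Prime 3)]
  rw [h2nv]
  simp only [Nat.card_eq_fintype_card, Fintype.card_fin, Nat.totient_two, one_pow,
    Nat.add_sub_cancel]
  split_ifs with hcond
  · ring
  · simp
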